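/- Let V=(Q,D,Δ,w) be a 1-VASS with disequality tests (with single disequality guards). For every n ∈ ℕ and every n-active bounded chain C, |δ_n(C)| ≤ |Q| · |C ∖ U_n|. -/

import Mathlib

namespace VASSPaper

/-- A 1-VASS with disequality tests: states `Q`, transition relation `delta`,
integer weights `w`, and for each state a cofinite set `D q ⊆ ℕ` of allowed counter values. -/
structure OneVASS (Q : Type) where
  delta : Q → Q → Prop
  w : Q → Q → ℤ
  D : Q → Set ℕ
  cofinite : ∀ q, (D q)ᶜ.Finite

variable {Q : Type}

/-- A path is a nonempty sequence of states joined by transitions. -/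
def IsPath (V : OneVASS Q) : List Q → Prop
  | [] => False
  | [_] => True
  | a :: b :: l => V.delta a b ∧ IsPath V (b :: l)

/-- The weight of a path: the sum of the weights of its transitions. -/
def pathWeight (V : OneVASS Q) (π : List Q) : ℤ :=
  (List.zipWith V.w π π.tail).sum

/-- The counter value at position `i` of the run over `π` starting with counter `z`. -/
def counterAt (V : OneVASS Q) (z : ℕ) (π : List Q) (i : ℕ) : ℤ :=
  (z : ℤ) + pathWeight V (π.take (i + 1))

/-- `π` lifts to a run from counter value `z`: all counter values stay nonnegative. -/
def IsRun (V : OneVASS Q) (π : List Q) (z : ℕ) : Prop :=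
  IsPath V π ∧ ∀ i, i < π.length → 0 ≤ counterAt V z π i

/-- A valid run additionally respects all disequality guards. -/
def IsValidRun (V : OneVASS Q) (π : List Q) (z : ℕ) : Prop :=
  IsRun V π z ∧ ∀ i, ∀ h : i < π.length, (counterAt V z π i).toNat ∈ V.D (π.get ⟨i, h⟩)

/-- `π` goes from configuration `c` to configuration `c'`. -/
def RunFromTo (V : OneVASS Q) (π : List Q) (c c' : Q × ℕ) : Prop :=
  π.head? = some c.1 ∧ π.getLast? = some c'.1 ∧ (c'.2 : ℤ) = (c.2 : ℤ) + pathWeight V π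

/-- `c'` is reachable from `c` by a valid run. -/
def Reaches (V : OneVASS Q) (c c' : Q × ℕ) : Prop :=
  ∃ π, IsValidRun V π c.2 ∧ RunFromTo V π c c'

/-- A configuration is unbounded if infinitely many configurations are reachable from it. -/
def Unbounded (V : OneVASS Q) (c : Q × ℕ) : Prop :=
  {c' | Reaches V c c'}.Infinite

/-- `(s,0)` covers the state `t`. -/
def Covers (V : OneVASS Q) (s t : Q) : Prop :=
  ∃ z, Reaches V (s, 0) (t, z)

/-- Every state has at most one disequality guard. -/
def SingleGuard (V : OneVASS Q) : Prop :=
  ∀ q, V.D q = Set.univ ∨ ∃ g : ℕ, V.D q = {g}ᶜ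

/-- The minimum weight of a (possibly empty) prefix of `π`. -/
def pmin (V : OneVASS Q) (π : List Q) : ℤ :=
  ((List.range (π.length + 1)).map fun i => pathWeight V (π.take i)).foldr min 0

/-- The maximum weight of a (possibly empty) suffix of `π`. -/
def smax (V : OneVASS Q) (π : List Q) : ℤ :=
  ((List.range (π.length + 1)).map fun i => pathWeight V (π.drop i)).foldr max 0

/-- A cycle on `q`: a path with at least one transition starting and ending at `q`. -/
def IsCycleOn (V : OneVASS Q) (π : List Q) (q : Q) : Prop :=
  IsPath V π ∧ 2 ≤ π.length ∧ π.head? = some q ∧ π.getLast? = some q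

/-- A simple cycle on `q`. -/
def IsSimpleCycleOn (V : OneVASS Q) (π : List Q) (q : Q) : Prop :=
  IsCycleOn V π q ∧ π.dropLast.Nodup

/-- The set of states lying on a positive-weight simple cycle. -/
def Qplus (V : OneVASS Q) : Set Q :=
  {q | ∃ π, IsSimpleCycleOn V π q ∧ 0 < pathWeight V π}

/-- `γ` is a valid choice of cycles: for each `q ∈ Q₊`, `γ q` is a simple positive cycle
on `q` whose `pmin` is maximal among all positive-weight simple cycles on `q`. -/
def GammaChoice (V : OneVASS Q) (γ : Q → List Q) : Prop :=
  ∀ q ∈ Qplus V,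
    IsSimpleCycleOn V (γ q) q ∧ 0 < pathWeight V (γ q) ∧
      ∀ π, IsSimpleCycleOn V π q → 0 < pathWeight V π → pmin V π ≤ pmin V (γ q)

/-- `Conf₊`: configurations `(q,z)` with `q ∈ Q₊` and `z + pmin (γ q) ≥ 0`. -/
def ConfPlus (V : OneVASS Q) (γ : Q → List Q) : Set (Q × ℕ) :=
  {c | c.1 ∈ Qplus V ∧ 0 ≤ (c.2 : ℤ) + pmin V (γ c.1)}

/-- `W_q`, the weight of the chosen cycle `γ q`, as a natural number. -/
def Wnat (V : OneVASS Q) (γ : Q → List Q) (q : Q) : ℕ :=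
  (pathWeight V (γ q)).toNat

/-- The `q`-residue class of `r` modulo `W_q`. -/
def resClass (V : OneVASS Q) (γ : Q → List Q) (q : Q) (r : ℕ) : Set (Q × ℕ) :=
  {c | c ∈ ConfPlus V γ ∧ c.1 = q ∧ c.2 % Wnat V γ q = r}

/-- `iterCycle π k` is the cycle `π` iterated `k+1` times. -/
def iterCycle (π : List Q) : ℕ → List Q
  | 0 => π
  | k + 1 => iterCycle π k ++ π.tail

/-- Counter values `z < z'` at state `q` are connected by a valid run iterating `γ q`. -/
def chainLinked (V : OneVASS Q) (γ : Q → List Q) (q : Q) (z z' : ℕ) : Prop :=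
  ∃ k, IsValidRun V (iterCycle (γ q) k) z ∧
    (z' : ℤ) = (z : ℤ) + pathWeight V (iterCycle (γ q) k)

/-- Any two configurations of `S` are connected by iterating `γ q`. -/
def ChainCond (V : OneVASS Q) (γ : Q → List Q) (q : Q) (S : Set (Q × ℕ)) : Prop :=
  ∀ c ∈ S, ∀ c' ∈ S, c.2 < c'.2 → chainLinked V γ q c.2 c'.2

/-- A `q`-chain inside the `q`-residue class of `r`: a maximal subset whose
configurations are pairwise connected by iterating `γ q`. -/
def IsChainIn (V : OneVASS Q) (γ : Q → List Q) (q : Q) (r : ℕ) (C : Set (Q × ℕ)) : Prop :=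
  C ⊆ resClass V γ q r ∧ ChainCond V γ q C ∧
    ∀ C', C ⊆ C' → C' ⊆ resClass V γ q r → ChainCond V γ q C' → C' = C

/-- A chain (in some residue class of some state of `Q₊`). -/
def IsChain (V : OneVASS Q) (γ : Q → List Q) (C : Set (Q × ℕ)) : Prop :=
  ∃ q r, q ∈ Qplus V ∧ r < Wnat V γ q ∧ IsChainIn V γ q r C

/-- A set of configurations is bounded if its counter values are bounded. -/
def chainBounded (C : Set (Q × ℕ)) : Prop :=
  BddAbove (Prod.snd '' C)

/-- A residue class is trivial if it consists of a single unbounded chain. -/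
def TrivialClass (V : OneVASS Q) (γ : Q → List Q) (q : Q) (r : ℕ) : Prop :=
  IsChainIn V γ q r (resClass V γ q r) ∧ ¬ chainBounded (resClass V γ q r)

/-- There is a valid run of length `k` (i.e. `k` transitions) from `c` into the set `S`. -/
def RunLenTo (V : OneVASS Q) (c : Q × ℕ) (S : Set (Q × ℕ)) (k : ℕ) : Prop :=
  ∃ π c', c' ∈ S ∧ IsValidRun V π c.2 ∧ RunFromTo V π c c' ∧ π.length = k + 1

/-- Configurations of `Conf₊ \ Un` whose distance to `Un` is minimal among all
configurations of `Conf₊ \ Un`. -/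
def Uprime (V : OneVASS Q) (γ : Q → List Q) (Un : Set (Q × ℕ)) : Set (Q × ℕ) :=
  {c | c ∈ ConfPlus V γ \ Un ∧
    ∃ k, RunLenTo V c Un k ∧
      ∀ c' ∈ ConfPlus V γ \ Un, ∀ j, RunLenTo V c' Un j → k ≤ j}

/-- `S` is downward closed in every chain. -/
def dcClosed (V : OneVASS Q) (γ : Q → List Q) (S : Set (Q × ℕ)) : Prop :=
  ∀ C, IsChain V γ C → ∀ c ∈ S ∩ C, ∀ c' ∈ C, c'.2 ≤ c.2 → c' ∈ S

/-- The inductive sequence `U_n`: `U_0` is the union of the unbounded chains; `U_{n+1}` is the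
smallest superset of `U_n ∪ U'_n` that is downward closed in every chain. -/
def U (V : OneVASS Q) (γ : Q → List Q) : ℕ → Set (Q × ℕ)
  | 0 => ⋃₀ {C | IsChain V γ C ∧ ¬ chainBounded C}
  | n + 1 => ⋂₀ {S | U V γ n ∪ Uprime V γ (U V γ n) ⊆ S ∧ dcClosed V γ S}

/-- `C` is an `n`-active bounded chain in the `q`-residue class of `r`. -/
def nActiveIn (V : OneVASS Q) (γ : Q → List Q) (q : Q) (r : ℕ) (n : ℕ)
    (C : Set (Q × ℕ)) : Prop :=
  IsChainIn V γ q r C ∧ chainBounded C ∧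
    ∃ c ∈ U V γ n ∩ resClass V γ q r, ∃ c' ∈ C, c.2 ≤ c'.2

/-- `δ_n(C)` for a `q`-chain `C`: configurations outside `U_n` whose counter value lies
between two counter values of `C \ U_n`. -/
def deltaC (V : OneVASS Q) (γ : Q → List Q) (n : ℕ) (q : Q) (C : Set (Q × ℕ)) :
    Set (Q × ℕ) :=
  {c | c ∈ ConfPlus V γ ∧ c.1 = q ∧ c ∉ U V γ n ∧
    ∃ z₁ z₂, (q, z₁) ∈ C \ U V γ n ∧ (q, z₂) ∈ C \ U V γ n ∧ z₁ ≤ c.2 ∧ c.2 ≤ z₂}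

/-- `δ_n(R)` for the `q`-residue class `R` of `r`: union of `δ_n(C)` over `n`-active chains. -/
def deltaR (V : OneVASS Q) (γ : Q → List Q) (n : ℕ) (q : Q) (r : ℕ) : Set (Q × ℕ) :=
  {c | ∃ C, nActiveIn V γ q r n C ∧ c ∈ deltaC V γ n q C}

/-- A positive-weight cycle (as a list of states). -/
def IsPosCycle (V : OneVASS Q) (π : List Q) : Prop :=
  2 ≤ π.length ∧ π.head? = π.getLast? ∧ 0 < pathWeight V π

/-- A path is primitive if no proper infix of it is a positive-weight cycle. -/
def Primitive (V : OneVASS Q) (π : List Q) : Prop :=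
  ∀ i l, (π.drop i).take l ≠ π → ¬ IsPosCycle V ((π.drop i).take l)

section Aux
variable {Q : Type} {V : OneVASS Q}

lemma pathWeight_nil : pathWeight V ([] : List Q) = 0 := rfl
lemma pathWeight_single (a : Q) : pathWeight V [a] = 0 := rfl
lemma pathWeight_cons_cons (a b : Q) (l : List Q) :
    pathWeight V (a :: b :: l) = V.w a b + pathWeight V (b :: l) := by
  simp [pathWeight]

lemma pathWeight_append_cons {π : List Q} {a : Q} (ρ : List Q)
    (h : π.getLast? = some a) :
    pathWeight V (π ++ ρ) = pathWeight V π + pathWeight V (a :: ρ) := by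
  induction π with
  | nil => simp at h
  | cons x l ih =>
    cases l with
    | nil =>
      simp at h
      subst h
      simp [pathWeight_single]
    | cons y m =>
      rw [List.getLast?_cons_cons] at h
      have hih := ih h
      simp only [List.cons_append] at hih ⊢
      rw [pathWeight_cons_cons, pathWeight_cons_cons, hih]
      ring

lemma IsPath_append_tail {π ρ : List Q} (hπ : IsPath V π) (hρ : IsPath V ρ)
    (h : π.getLast? = ρ.head?) : IsPath V (π ++ ρ.tail) := by
  induction π with
  | nil => exact absurd hπ (by simp [IsPath])
  | cons x l ih =>
    cases l with
    | nil =>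
      cases ρ with
      | nil => simp at h
      | cons b m =>
        simp at h
        subst h
        simpa using hρ
    | cons y m =>
      rw [List.getLast?_cons_cons] at h
      obtain ⟨hd, hp⟩ := hπ
      exact ⟨hd, ih hp h⟩

lemma iterCycle_zero (Γ : List Q) : iterCycle Γ 0 = Γ := rfl

lemma iterCycle_succ (Γ : List Q) (k : ℕ) :
    iterCycle Γ (k+1) = iterCycle Γ k ++ Γ.tail := rfl

lemma iterCycle_ne_nil {Γ : List Q} (hΓ : Γ ≠ []) (k : ℕ) : iterCycle Γ k ≠ [] := by
  induction k with
  | zero => exact hΓ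
  | succ k ih => simp [iterCycle_succ, ih]

lemma iterCycle_head? {Γ : List Q} (hΓ : Γ ≠ []) (k : ℕ) :
    (iterCycle Γ k).head? = Γ.head? := by
  induction k with
  | zero => rfl
  | succ k ih =>
    rw [iterCycle_succ, List.head?_append_of_ne_nil _ (iterCycle_ne_nil hΓ k)]
    exact ih

lemma iterCycle_length {Γ : List Q} (h2 : 2 ≤ Γ.length) (k : ℕ) :
    (iterCycle Γ k).length = (k+1) * (Γ.length - 1) + 1 := by
  induction k with
  | zero => rw [iterCycle_zero]; omega
  | succ k ih =>
    rw [iterCycle_succ, List.length_append, ih, List.length_tail]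
    ring_nf

lemma iterCycle_succ_front {Γ : List Q} (hΓ : Γ ≠ []) (k : ℕ) :
    iterCycle Γ (k+1) = Γ ++ (iterCycle Γ k).tail := by
  induction k with
  | zero => rfl
  | succ k ih =>
    calc iterCycle Γ (k+1+1) = iterCycle Γ (k+1) ++ Γ.tail := rfl
      _ = (Γ ++ (iterCycle Γ k).tail) ++ Γ.tail := by rw [ih]
      _ = Γ ++ ((iterCycle Γ k).tail ++ Γ.tail) := by rw [List.append_assoc]
      _ = Γ ++ (iterCycle Γ k ++ Γ.tail).tail := by
          rw [List.tail_append_of_ne_nil (iterCycle_ne_nil hΓ k)]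
      _ = Γ ++ (iterCycle Γ (k+1)).tail := rfl

lemma iterCycle_eq_append {Γ : List Q} (hΓ : Γ ≠ []) (k : ℕ) :
    ∃ s, iterCycle Γ k = Γ ++ s := by
  cases k with
  | zero => exact ⟨[], by simp [iterCycle]⟩
  | succ k => exact ⟨_, iterCycle_succ_front hΓ k⟩

lemma iterCycle_getLast? {Γ : List Q} {q : Q} (h2 : 2 ≤ Γ.length)
    (hl : Γ.getLast? = some q) (k : ℕ) :
    (iterCycle Γ k).getLast? = some q := by
  induction k with
  | zero => exact hl
  | succ k ih =>
    rw [iterCycle_succ]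
    have hne : Γ.tail ≠ [] := by
      cases Γ with
      | nil => simp at h2
      | cons a l => cases l with
        | nil => simp at h2
        | cons b m => simp
    rw [List.getLast?_append_of_ne_nil _ hne]
    cases Γ with
    | nil => simp at h2
    | cons a l =>
      cases l with
      | nil => simp at h2
      | cons b m => simpa using hl

lemma iterCycle_isPath {Γ : List Q} {q : Q} (hp : IsPath V Γ) (h2 : 2 ≤ Γ.length)
    (hh : Γ.head? = some q) (hl : Γ.getLast? = some q) (k : ℕ) :
    IsPath V (iterCycle Γ k) := by
  induction k with
  | zero => exact hp
  | succ k ih =>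
    rw [iterCycle_succ]
    exact IsPath_append_tail ih hp (by rw [iterCycle_getLast? h2 hl, hh])

lemma iterCycle_weight {Γ : List Q} {q : Q} (h2 : 2 ≤ Γ.length)
    (hh : Γ.head? = some q) (hl : Γ.getLast? = some q) (k : ℕ) :
    pathWeight V (iterCycle Γ k) = (k+1) * pathWeight V Γ := by
  induction k with
  | zero => simp [iterCycle]
  | succ k ih =>
    rw [iterCycle_succ, pathWeight_append_cons _ (iterCycle_getLast? h2 hl k), ih]
    have hq : q :: Γ.tail = Γ := by
      cases Γ with
      | nil => simp at hh
      | cons a l => simp at hh; subst hh; rfl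
    rw [hq]
    push_cast
    ring

end Aux
section FF
variable {Q : Type} {V : OneVASS Q} {Γ : List Q} {q : Q}

lemma pathWeight_take_one (l : List Q) : pathWeight V (l.take 1) = 0 := by
  cases l with
  | nil => rfl
  | cons a m => simp [pathWeight]

lemma Γ_ne_nil (h2 : 2 ≤ Γ.length) : Γ ≠ [] := by
  intro h; rw [h] at h2; simp at h2

lemma getD_base (h2 : 2 ≤ Γ.length) (hh : Γ.head? = some q) (hl : Γ.getLast? = some q)
    {j : ℕ} (hj : j ≤ Γ.length - 1) :
    Γ.getD j q = Γ.getD (j % (Γ.length - 1)) q := by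
  have hne := Γ_ne_nil h2
  rcases lt_or_eq_of_le hj with h | h
  · rw [Nat.mod_eq_of_lt h]
  · rw [h, Nat.mod_self]
    have h1 : Γ.getD (Γ.length - 1) q = Γ.getLast hne := by
      rw [List.getD_eq_getElem _ _ (by omega), List.getLast_eq_getElem]
    have h2' : Γ.getD 0 q = Γ.head hne := by
      rw [List.getD_eq_getElem _ _ (by omega), List.getElem_zero]
    rw [h1, h2']
    rw [List.getLast?_eq_getLast hne] at hl
    rw [List.head?_eq_head hne] at hh
    simp at hl hh
    rw [hl, hh]

lemma take_base (h2 : 2 ≤ Γ.length) (hh : Γ.head? = some q) (hl : Γ.getLast? = some q)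
    {j : ℕ} (hj : j ≤ Γ.length - 1) :
    pathWeight V (Γ.take (j+1)) =
      ((j / (Γ.length - 1) : ℕ) : ℤ) * pathWeight V Γ
        + pathWeight V (Γ.take (j % (Γ.length - 1) + 1)) := by
  rcases lt_or_eq_of_le hj with h | h
  · rw [Nat.mod_eq_of_lt h, Nat.div_eq_of_lt h]
    simp
  · have hL : j + 1 = Γ.length := by omega
    rw [h, Nat.mod_self, Nat.div_self (by omega),
      show Γ.length - 1 + 1 = Γ.length from by omega, List.take_length,
      pathWeight_take_one]
    simp

lemma iterCycle_take_of_le (h2 : 2 ≤ Γ.length) {K j : ℕ} (hj : j + 1 ≤ Γ.length) :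
    (iterCycle Γ K).take (j+1) = Γ.take (j+1) := by
  obtain ⟨s, hs⟩ := iterCycle_eq_append (Γ_ne_nil h2) K
  rw [hs, List.take_append_of_le_length hj]

lemma iterCycle_take_weight (h2 : 2 ≤ Γ.length) (hh : Γ.head? = some q)
    (hl : Γ.getLast? = some q) :
    ∀ K j, j ≤ (K+1) * (Γ.length - 1) →
      pathWeight V ((iterCycle Γ K).take (j+1)) =
        ((j / (Γ.length - 1) : ℕ) : ℤ) * pathWeight V Γ
          + pathWeight V (Γ.take (j % (Γ.length - 1) + 1)) := by
  have hne := Γ_ne_nil h2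
  intro K
  induction K with
  | zero =>
    intro j hj
    rw [iterCycle_zero]
    exact take_base h2 hh hl (by omega)
  | succ K ih =>
    intro j hj
    rcases le_or_gt j (Γ.length - 1) with h | h
    · rw [iterCycle_take_of_le h2 (by omega)]
      exact take_base h2 hh hl h
    · set Lm := Γ.length - 1 with hLm
      have hLmpos : 0 < Lm := by omega
      set m := j - Lm with hm
      have hmle : m ≤ (K+1) * Lm := by
        have : (K+1+1) * Lm = (K+1) * Lm + Lm := by ring
        omega
      have hql : q ∈ (iterCycle Γ K).head? := by
        rw [iterCycle_head? hne, hh]; rfl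
      have key : (iterCycle Γ (K+1)).take (j+1)
          = Γ ++ ((iterCycle Γ K).tail.take m) := by
        rw [iterCycle_succ_front hne, List.take_append,
          List.take_of_length_le (by omega)]
        congr 1
        congr 1
        omega
      rw [key, pathWeight_append_cons _ hl]
      have hcons : q :: (iterCycle Γ K).tail.take m
          = (iterCycle Γ K).take (m+1) := by
        conv_rhs => rw [← List.cons_head?_tail hql]
        rw [List.take_succ_cons]
      rw [hcons, ih m hmle]
      have hjm : j = m + Lm := by omega
      rw [hjm, Nat.add_div_right _ hLmpos, Nat.add_mod_right]
      push_cast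
      ring

lemma getD_tail (l : List Q) (n : ℕ) (d : Q) : l.tail.getD n d = l.getD (n+1) d := by
  rw [List.getD_eq_getElem?_getD, List.getD_eq_getElem?_getD, List.getElem?_tail]

lemma iterCycle_getD (h2 : 2 ≤ Γ.length) (hh : Γ.head? = some q)
    (hl : Γ.getLast? = some q) :
    ∀ K j, j ≤ (K+1) * (Γ.length - 1) →
      (iterCycle Γ K).getD j q = Γ.getD (j % (Γ.length - 1)) q := by
  have hne := Γ_ne_nil h2
  intro K
  induction K with
  | zero =>
    intro j hj
    rw [iterCycle_zero]
    exact getD_base h2 hh hl (by omega)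
  | succ K ih =>
    intro j hj
    rcases le_or_gt j (Γ.length - 1) with h | h
    · obtain ⟨s, hs⟩ := iterCycle_eq_append hne (K+1)
      rw [hs, List.getD_append _ _ _ _ (by omega)]
      exact getD_base h2 hh hl h
    · set Lm := Γ.length - 1 with hLm
      have hLmpos : 0 < Lm := by omega
      set m := j - Lm with hm
      have hmle : m ≤ (K+1) * Lm := by
        have : (K+1+1) * Lm = (K+1) * Lm + Lm := by ring
        omega
      rw [iterCycle_succ_front hne, List.getD_append_right _ _ _ _ (by omega),
        getD_tail]
      have : j - Γ.length + 1 = m := by omega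
      rw [this, ih m hmle]
      have hjm : j = m + Lm := by omega
      rw [hjm, Nat.add_mod_right]

lemma iterCycle_valid_iff (hp : IsPath V Γ) (h2 : 2 ≤ Γ.length)
    (hh : Γ.head? = some q) (hl : Γ.getLast? = some q) (K z : ℕ) :
    IsValidRun V (iterCycle Γ K) z ↔ ∀ j, j ≤ (K+1) * (Γ.length - 1) →
      (0 ≤ (z:ℤ) + ((j / (Γ.length - 1) : ℕ) : ℤ) * pathWeight V Γ
          + pathWeight V (Γ.take (j % (Γ.length - 1) + 1)) ∧
        ((z:ℤ) + ((j / (Γ.length - 1) : ℕ) : ℤ) * pathWeight V Γ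
          + pathWeight V (Γ.take (j % (Γ.length - 1) + 1))).toNat
            ∈ V.D (Γ.getD (j % (Γ.length - 1)) q)) := by
  have hne := Γ_ne_nil h2
  have hlen := iterCycle_length h2 K
  have hcount : ∀ j, j ≤ (K+1) * (Γ.length - 1) →
      counterAt V z (iterCycle Γ K) j
        = (z:ℤ) + ((j / (Γ.length - 1) : ℕ) : ℤ) * pathWeight V Γ
          + pathWeight V (Γ.take (j % (Γ.length - 1) + 1)) := by
    intro j hj
    rw [counterAt, iterCycle_take_weight h2 hh hl K j hj, add_assoc]
  have hget : ∀ j (hjl : j < (iterCycle Γ K).length),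
      (iterCycle Γ K).get ⟨j, hjl⟩ = Γ.getD (j % (Γ.length - 1)) q := by
    intro j hjl
    rw [List.get_eq_getElem, ← List.getD_eq_getElem _ q hjl,
      iterCycle_getD h2 hh hl K j (by omega)]
  constructor
  · rintro ⟨⟨_, hpos⟩, hg⟩ j hj
    have hjl : j < (iterCycle Γ K).length := by omega
    constructor
    · have := hpos j hjl
      rwa [hcount j hj] at this
    · have := hg j hjl
      rwa [hcount j hj, hget j hjl] at this
  · intro hP
    refine ⟨⟨iterCycle_isPath hp h2 hh hl K, ?_⟩, ?_⟩
    · intro i hi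
      rw [hcount i (by omega)]
      exact (hP i (by omega)).1
    · intro i hi
      rw [hcount i (by omega), hget i hi]
      exact (hP i (by omega)).2

end FF
section Link
variable {Q : Type} {V : OneVASS Q} {Γ : List Q} {q : Q}

/-- The guard/nonnegativity condition at abstract position `j` of an iterated cycle. -/
def Pcond (V : OneVASS Q) (Γ : List Q) (q : Q) (z : ℤ) (j : ℕ) : Prop :=
  0 ≤ z + ((j / (Γ.length - 1) : ℕ) : ℤ) * pathWeight V Γ
      + pathWeight V (Γ.take (j % (Γ.length - 1) + 1)) ∧
    (z + ((j / (Γ.length - 1) : ℕ) : ℤ) * pathWeight V Γ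
      + pathWeight V (Γ.take (j % (Γ.length - 1) + 1))).toNat
        ∈ V.D (Γ.getD (j % (Γ.length - 1)) q)

lemma Pcond_iff (z : ℤ) (j : ℕ) :
    Pcond V Γ q z j ↔
      (0 ≤ z + ((j / (Γ.length - 1) : ℕ) : ℤ) * pathWeight V Γ
          + pathWeight V (Γ.take (j % (Γ.length - 1) + 1)) ∧
        (z + ((j / (Γ.length - 1) : ℕ) : ℤ) * pathWeight V Γ
          + pathWeight V (Γ.take (j % (Γ.length - 1) + 1))).toNat
            ∈ V.D (Γ.getD (j % (Γ.length - 1)) q)) := Iff.rfl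

lemma iterCycle_valid_iff' (hp : IsPath V Γ) (h2 : 2 ≤ Γ.length)
    (hh : Γ.head? = some q) (hl : Γ.getLast? = some q) (K z : ℕ) :
    IsValidRun V (iterCycle Γ K) z ↔
      ∀ j, j ≤ (K+1) * (Γ.length - 1) → Pcond V Γ q (z : ℤ) j :=
  iterCycle_valid_iff hp h2 hh hl K z

lemma Pcond_shift (h2 : 2 ≤ Γ.length) (z : ℤ) (m j : ℕ) :
    Pcond V Γ q (z + (m : ℤ) * pathWeight V Γ) j
      ↔ Pcond V Γ q z ((Γ.length - 1) * m + j) := by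
  have hLm : 0 < Γ.length - 1 := by omega
  have hdiv : ((Γ.length - 1) * m + j) / (Γ.length - 1) = m + j / (Γ.length - 1) :=
    Nat.mul_add_div hLm m j
  have hmod : ((Γ.length - 1) * m + j) % (Γ.length - 1) = j % (Γ.length - 1) :=
    Nat.mul_add_mod _ m j
  have hexp : z + (((((Γ.length - 1) * m + j) / (Γ.length - 1) : ℕ)) : ℤ)
        * pathWeight V Γ
        + pathWeight V (Γ.take (((Γ.length - 1) * m + j) % (Γ.length - 1) + 1))
      = (z + (m : ℤ) * pathWeight V Γ)
        + ((j / (Γ.length - 1) : ℕ) : ℤ) * pathWeight V Γ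
        + pathWeight V (Γ.take (j % (Γ.length - 1) + 1)) := by
    rw [hdiv, hmod]
    push_cast
    ring
  unfold Pcond
  rw [hdiv, hmod] at hexp ⊢
  rw [hexp]

/-- `LinkedL V Γ z z'` is `chainLinked` expressed for a concrete cycle list. -/
def LinkedL (V : OneVASS Q) (Γ : List Q) (z z' : ℕ) : Prop :=
  ∃ k, IsValidRun V (iterCycle Γ k) z ∧
    (z' : ℤ) = (z : ℤ) + pathWeight V (iterCycle Γ k)

lemma linkedL_trans (hp : IsPath V Γ) (h2 : 2 ≤ Γ.length)
    (hh : Γ.head? = some q) (hl : Γ.getLast? = some q)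
    {z z' z'' : ℕ} (h1 : LinkedL V Γ z z') (h2' : LinkedL V Γ z' z'') :
    LinkedL V Γ z z'' := by
  obtain ⟨k₁, v₁, e₁⟩ := h1
  obtain ⟨k₂, v₂, e₂⟩ := h2'
  rw [iterCycle_weight h2 hh hl] at e₁ e₂
  refine ⟨k₁ + k₂ + 1, ?_, ?_⟩
  · rw [iterCycle_valid_iff' hp h2 hh hl]
    rw [iterCycle_valid_iff' hp h2 hh hl] at v₁ v₂
    intro j hj
    rcases le_or_gt j ((k₁+1) * (Γ.length - 1)) with h | h
    · exact v₁ j h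
    · have hsplit : (k₁+k₂+1+1) * (Γ.length - 1)
          = (k₁+1) * (Γ.length - 1) + (k₂+1) * (Γ.length - 1) := by ring
      set j' := j - (k₁+1) * (Γ.length - 1) with hj'
      have hj'le : j' ≤ (k₂+1) * (Γ.length - 1) := by omega
      have hjeq : j = (Γ.length - 1) * (k₁+1) + j' := by
        have : (k₁+1) * (Γ.length - 1) = (Γ.length - 1) * (k₁+1) := by ring
        omega
      have := v₂ j' hj'le
      rw [show ((z' : ℕ) : ℤ) = (z : ℤ) + ((k₁+1 : ℕ) : ℤ) * pathWeight V Γ by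
        push_cast; push_cast at e₁; linarith] at this
      rw [Pcond_shift h2] at this
      rwa [hjeq]
  · rw [iterCycle_weight h2 hh hl]
    push_cast
    push_cast at e₁ e₂
    linarith
lemma linkedL_split (hp : IsPath V Γ) (h2 : 2 ≤ Γ.length)
    (hh : Γ.head? = some q) (hl : Γ.getLast? = some q)
    (hW : 0 < pathWeight V Γ)
    {z y z'' : ℕ} (h1 : LinkedL V Γ z z'') (hzy : z < y) (hyz : y < z'')
    (hdvd : pathWeight V Γ ∣ ((y : ℤ) - (z : ℤ))) :
    LinkedL V Γ z y ∧ LinkedL V Γ y z'' := by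
  obtain ⟨K, hv, he⟩ := h1
  rw [iterCycle_weight h2 hh hl] at he
  obtain ⟨m0, hm0⟩ := hdvd
  have hm0pos : 0 < m0 := by
    nlinarith [hm0, hW, (by exact_mod_cast hzy : (z:ℤ) < (y:ℤ))]
  set m := m0.toNat with hmdef
  have hmcast : (m : ℤ) = m0 := Int.toNat_of_nonneg hm0pos.le
  have hy : (y : ℤ) = (z : ℤ) + (m : ℤ) * pathWeight V Γ := by
    rw [hmcast]; linarith [hm0]
  have hm1 : 1 ≤ m := by
    rcases Nat.eq_zero_or_pos m with h | h
    · exfalso; rw [h] at hmcast; omega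
    · exact h
  have hmK : m ≤ K := by
    by_contra hcon
    push_neg at hcon
    have : (K + 1 : ℤ) ≤ (m : ℤ) := by exact_mod_cast hcon
    have : ((K:ℤ)+1) * pathWeight V Γ ≤ (m:ℤ) * pathWeight V Γ :=
      mul_le_mul_of_nonneg_right this hW.le
    have hzz : (z'' : ℤ) = z + ((K:ℤ)+1) * pathWeight V Γ := by
      push_cast at he ⊢; linarith
    have : (z'' : ℤ) ≤ (y : ℤ) := by rw [hzz, hy]; linarith
    have := (by exact_mod_cast hyz : (y:ℤ) < (z'':ℤ))
    linarith
  rw [iterCycle_valid_iff' hp h2 hh hl] at hv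
  constructor
  · refine ⟨m - 1, ?_, ?_⟩
    · rw [iterCycle_valid_iff' hp h2 hh hl]
      intro j hj
      refine hv j (le_trans hj ?_)
      have : m - 1 + 1 ≤ K + 1 := by omega
      exact Nat.mul_le_mul_right _ this
    · rw [iterCycle_weight h2 hh hl]
      have hc : ((m - 1 : ℕ) : ℤ) = (m : ℤ) - 1 := by omega
      rw [hc, hy]
      ring
  · refine ⟨K - m, ?_, ?_⟩
    · rw [iterCycle_valid_iff' hp h2 hh hl]
      intro j hj
      rw [show ((y : ℕ) : ℤ) = (z : ℤ) + ((m:ℕ) : ℤ) * pathWeight V Γ from hy,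
        Pcond_shift h2]
      refine hv _ ?_
      have h1' : (K - m + 1) * (Γ.length - 1) + m * (Γ.length - 1)
          = (K+1) * (Γ.length - 1) := by
        have : (K - m + 1) + m = K + 1 := by omega
        calc (K - m + 1) * (Γ.length - 1) + m * (Γ.length - 1)
            = ((K - m + 1) + m) * (Γ.length - 1) := by ring
          _ = (K+1) * (Γ.length - 1) := by rw [this]
      have : (Γ.length - 1) * m = m * (Γ.length - 1) := by ring
      omega
    · rw [iterCycle_weight h2 hh hl]
      have hc2 : ((K - m : ℕ) : ℤ) = (K : ℤ) - (m : ℤ) := by omega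
      rw [hc2, hy]
      linear_combination he

lemma foldr_min_le {l : List ℤ} {x : ℤ} (b : ℤ) (hx : x ∈ l) :
    l.foldr min b ≤ x := by
  induction l with
  | nil => simp at hx
  | cons a m ih =>
    rcases List.mem_cons.1 hx with h | h
    · subst h; exact min_le_left _ _
    · exact le_trans (min_le_right _ _) (ih h)

lemma pmin_le_take {i : ℕ} (hi : i ≤ Γ.length) :
    pmin V Γ ≤ pathWeight V (Γ.take i) := by
  apply foldr_min_le
  exact List.mem_map.2 ⟨i, List.mem_range.2 (by omega), rfl⟩

end Link
section USec
variable {Q : Type} {V : OneVASS Q} {γ : Q → List Q}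

lemma U_succ_def (V : OneVASS Q) (γ : Q → List Q) (n : ℕ) :
    U V γ (n+1) = ⋂₀ {S | U V γ n ∪ Uprime V γ (U V γ n) ⊆ S ∧ dcClosed V γ S} := rfl

lemma U_mono (V : OneVASS Q) (γ : Q → List Q) (n : ℕ) : U V γ n ⊆ U V γ (n+1) := by
  intro c hc
  rw [U_succ_def]
  exact fun S hS => hS.1 (Or.inl hc)

lemma U_zero_subset (V : OneVASS Q) (γ : Q → List Q) (n : ℕ) : U V γ 0 ⊆ U V γ n := by
  induction n with
  | zero => exact subset_rfl
  | succ n ih => exact ih.trans (U_mono V γ n)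

lemma U_dcClosed (V : OneVASS Q) (γ : Q → List Q) (n : ℕ) :
    dcClosed V γ (U V γ (n+1)) := by
  intro Ch hCh c hc c' hc' hle
  rw [U_succ_def]
  intro S hS
  have hcS : c ∈ S := by
    have := hc.1
    rw [U_succ_def] at this
    exact this S hS
  exact hS.2 Ch hCh c ⟨hcS, hc.2⟩ c' hc' hle

lemma exists_maximal_chainCond (V : OneVASS Q) (γ : Q → List Q) (q : Q) (r' : ℕ)
    (O : Set (Q × ℕ)) (hO : O ⊆ resClass V γ q r') (hCC : ChainCond V γ q O) :
    ∃ M, O ⊆ M ∧ M ⊆ resClass V γ q r' ∧ ChainCond V γ q M ∧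
      ∀ C', M ⊆ C' → C' ⊆ resClass V γ q r' → ChainCond V γ q C' → C' = M := by
  set S : Set (Set (Q × ℕ)) := {A | A ⊆ resClass V γ q r' ∧ ChainCond V γ q A}
  have hzorn := zorn_subset_nonempty S ?_ O ⟨hO, hCC⟩
  · obtain ⟨M, hOM, hMS, hmax⟩ := hzorn
    refine ⟨M, hOM, hMS.1, hMS.2, ?_⟩
    intro C' hMC' hC'res hC'CC
    exact subset_antisymm (hmax ⟨hC'res, hC'CC⟩ hMC') hMC'
  · intro c hcS hchain hcne
    refine ⟨⋃₀ c, ⟨?_, ?_⟩, fun s hs => Set.subset_sUnion_of_mem hs⟩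
    · exact Set.sUnion_subset fun A hA => (hcS hA).1
    · intro c1 hc1 c2 hc2 hlt
      obtain ⟨A, hA, hc1A⟩ := hc1
      obtain ⟨B, hB, hc2B⟩ := hc2
      rcases hchain.total hA hB with h | h
      · exact (hcS hB).2 c1 (h hc1A) c2 hc2B hlt
      · exact (hcS hA).2 c1 hc1A c2 (h hc2B) hlt

end USec
section Orbit
variable {Q : Type} {V : OneVASS Q}

lemma chainLinked_iff_linkedL (γf : Q → List Q) (qq : Q) (z z' : ℕ) :
    chainLinked V γf qq z z' ↔ LinkedL V (γf qq) z z' := Iff.rfl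

lemma mem_U0_of_forever (γf : Q → List Q) (q : Q)
    (hp : IsPath V (γf q)) (h2 : 2 ≤ (γf q).length)
    (hh : (γf q).head? = some q) (hl : (γf q).getLast? = some q)
    (hWpos : 0 < pathWeight V (γf q)) (hq : q ∈ Qplus V)
    (x : ℕ) (hconf : (q, x) ∈ ConfPlus V γf)
    (hall : ∀ K, IsValidRun V (iterCycle (γf q) K) x) :
    (q, x) ∈ U V γf 0 := by
  set W : ℕ := Wnat V γf q with hWdef
  have hWeq : (W : ℤ) = pathWeight V (γf q) := Int.toNat_of_nonneg hWpos.le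
  have hW0 : 0 < W := by
    by_contra hcon
    push_neg at hcon
    interval_cases W
    simp at hWeq
    omega
  set O : Set (Q × ℕ) := {c | ∃ k : ℕ, c = (q, x + k * W)} with hO
  have hOres : O ⊆ resClass V γf q (x % W) := by
    rintro c ⟨k, rfl⟩
    refine ⟨⟨hq, ?_⟩, rfl, by rw [Nat.add_mul_mod_self_right]⟩
    have h0 := hconf.2
    simp only at h0 ⊢
    have : (0:ℤ) ≤ (k : ℤ) * (W:ℤ) := by positivity
    push_cast
    push_cast at h0
    linarith
  have hbig : ∀ k' : ℕ, 0 < k' → LinkedL V (γf q) x (x + k' * W) := by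
    intro k' hk'
    refine ⟨k' - 1, hall _, ?_⟩
    rw [iterCycle_weight h2 hh hl]
    have : ((k' - 1 : ℕ) : ℤ) = (k' : ℤ) - 1 := by omega
    rw [this]
    push_cast
    rw [hWeq]
    ring
  have hOCC : ChainCond V γf q O := by
    rintro c ⟨k, rfl⟩ c' ⟨k', rfl⟩ hlt
    simp only at hlt
    have hkk : k < k' := by
      by_contra hcon
      push_neg at hcon
      have : k' * W ≤ k * W := Nat.mul_le_mul_right _ hcon
      omega
    rw [chainLinked_iff_linkedL]
    simp only
    rcases Nat.eq_zero_or_pos k with hk0 | hk0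
    · subst hk0
      simpa using hbig k' (by omega)
    · have hmul : k * W < k' * W := (Nat.mul_lt_mul_right hW0).2 hkk
      have hsp := linkedL_split hp h2 hh hl hWpos
        (z := x) (y := x + k * W) (z'' := x + k' * W) (hbig k' (by omega))
        (by have := Nat.mul_pos hk0 hW0; omega) (by omega)
        ⟨(k : ℤ), by rw [← hWeq]; push_cast; ring⟩
      exact hsp.2
  obtain ⟨M, hOM, hMres, hMCC, hMmax⟩ :=
    exists_maximal_chainCond V γf q (x % W) O hOres hOCC
  have hMchain : IsChain V γf M :=
    ⟨q, x % W, hq, Nat.mod_lt _ hW0, hMres, hMCC, hMmax⟩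
  have hMunb : ¬ chainBounded M := by
    rintro ⟨b, hb⟩
    have hmem : (q, x + (b+1) * W) ∈ M := hOM ⟨b+1, rfl⟩
    have := hb ⟨(q, x + (b+1) * W), hmem, rfl⟩
    simp only at this
    have : b + 1 ≤ (b+1) * W := Nat.le_mul_of_pos_right _ hW0
    omega
  exact ⟨M, ⟨hMchain, hMunb⟩, hOM ⟨0, by simp⟩⟩

end Orbit
/-- Lemma 5: for every `n` and every `n`-active bounded chain `C`,
`|δ_n(C)| ≤ |Q| · |C \ U_n|`. -/
theorem deltaC_card_le
    {Q : Type} [Fintype Q] (V : OneVASS Q) (hD : SingleGuard V)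
    (γ : Q → List Q) (hγ : GammaChoice V γ)
    (n : ℕ) (q : Q) (r : ℕ) (C : Set (Q × ℕ))
    (hC : nActiveIn V γ q r n C) :
    (deltaC V γ n q C).Finite ∧
    (deltaC V γ n q C).ncard ≤ Fintype.card Q * (C \ U V γ n).ncard := by
  classical
  obtain ⟨hChainIn, hBdd, u, huUR, c₀, hc₀C, hu_le⟩ := hC
  obtain ⟨hCres, hCCC, hCmax⟩ := hChainIn
  have huR : u ∈ resClass V γ q r := huUR.2
  have hqQ : q ∈ Qplus V := by
    have h1 := huR.1.1
    rwa [huR.2.1] at h1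
  obtain ⟨hsc, hWpos, -⟩ := hγ q hqQ
  obtain ⟨⟨hp, h2, hh, hl⟩, hnd⟩ := hsc
  have hWeq : ((Wnat V γ q : ℕ) : ℤ) = pathWeight V (γ q) := Int.toNat_of_nonneg hWpos.le
  set W : ℕ := Wnat V γ q with hWdef
  have hWnat : Wnat V γ q = W := rfl
  have hW0 : 0 < W := by
    by_contra hcon
    push_neg at hcon
    interval_cases W
    simp at hWeq
    omega
  have hrW : r < W := by rw [← huR.2.2]; exact Nat.mod_lt _ hW0
  have hchainC : IsChain V γ C := ⟨q, r, hqQ, hrW, hCres, hCCC, hCmax⟩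
  by_cases hemp : (C \ U V γ n) = ∅
  · have hδ : deltaC V γ n q C = ∅ := by
      ext c
      simp only [deltaC, Set.mem_setOf_eq, Set.mem_empty_iff_false, iff_false]
      rintro ⟨-, -, -, z₁, z₂, hz₁, -, -, -⟩
      rw [hemp] at hz₁
      exact hz₁
    rw [hδ]
    exact ⟨Set.finite_empty, by simp⟩
  have hSne : (C \ U V γ n).Nonempty := Set.nonempty_iff_ne_empty.2 hemp
  obtain ⟨Mb, hMb⟩ := hBdd
  have hMb' : ∀ c ∈ C, c.2 ≤ Mb := fun c hc => hMb ⟨c, hc, rfl⟩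
  have hfst : ∀ c ∈ C, c.1 = q := fun c hc => (hCres hc).2.1
  have hmodC : ∀ c ∈ C, c.2 % W = r := fun c hc => (hCres hc).2.2
  have hCfin : C.Finite := by
    apply Set.Finite.subset ((Set.finite_Iic Mb).image (fun z => (q, z)))
    intro c hc
    refine ⟨c.2, hMb' c hc, ?_⟩
    obtain ⟨c1, c2⟩ := c
    simp only
    rw [show c1 = q from hfst (c1, c2) hc]
  have hSfin : (C \ U V γ n).Finite := hCfin.diff
  set Sv : Finset ℕ := hSfin.toFinset.image Prod.snd with hSv
  have hSvne : Sv.Nonempty := by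
    obtain ⟨c, hc⟩ := hSne
    exact ⟨c.2, Finset.mem_image.2 ⟨c, hSfin.mem_toFinset.2 hc, rfl⟩⟩
  set m₁ := Sv.min' hSvne with hm₁def
  set m₂ := Sv.max' hSvne with hm₂def
  have hmem_of : ∀ z ∈ Sv, (q, z) ∈ C \ U V γ n := by
    intro z hz
    obtain ⟨c, hcmem, rfl⟩ := Finset.mem_image.1 hz
    have hc := hSfin.mem_toFinset.1 hcmem
    have hc1 := hfst c hc.1
    obtain ⟨c1, c2⟩ := c
    simp only at hc1 ⊢
    rw [← hc1]
    exact hc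
  have hm₁S : (q, m₁) ∈ C \ U V γ n := hmem_of _ (Sv.min'_mem hSvne)
  have hm₂S : (q, m₂) ∈ C \ U V γ n := hmem_of _ (Sv.max'_mem hSvne)
  have hm₁C : (q, m₁) ∈ C := hm₁S.1
  have hm₂C : (q, m₂) ∈ C := hm₂S.1
  have hv_le : ∀ c ∈ C \ U V γ n, m₁ ≤ c.2 ∧ c.2 ≤ m₂ := by
    intro c hc
    have hzin : c.2 ∈ Sv := Finset.mem_image.2 ⟨c, hSfin.mem_toFinset.2 hc, rfl⟩
    exact ⟨Sv.min'_le _ hzin, Sv.le_max' _ hzin⟩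
  have hm₁conf : (q, m₁) ∈ ConfPlus V γ := (hCres hm₁C).1
  have hm₁r : m₁ % W = r := hmodC _ hm₁C
  have hdvd : ∀ a b : ℕ, a ≤ b → a % W = b % W →
      pathWeight V (γ q) ∣ ((b:ℤ) - (a:ℤ)) := by
    intro a b hab hmod
    obtain ⟨k, hk⟩ := (Nat.modEq_iff_dvd' hab).1 hmod
    refine ⟨(k : ℤ), ?_⟩
    rw [← hWeq]
    have hba : (b : ℤ) = (a : ℤ) + ((W * k : ℕ) : ℤ) := by
      rw [← hk]; push_cast; omega
    push_cast at hba ⊢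
    linarith
  have hlink : ∀ c ∈ C, ∀ c' ∈ C, c.2 < c'.2 → LinkedL V (γ q) c.2 c'.2 :=
    fun c hc c' hc' h => hCCC c hc c' hc' h
  -- Piece 1: every residue-class point between m₁ and m₂ is in C
  have hInC : ∀ y, m₁ ≤ y → y ≤ m₂ → y % W = r → (q, y) ∈ C := by
    intro y h1y h2y hyr
    have hyconf : (q, y) ∈ ConfPlus V γ := by
      refine ⟨hqQ, ?_⟩
      have hcp := hm₁conf.2
      simp only at hcp ⊢
      have hcast : (m₁ : ℤ) ≤ (y : ℤ) := by exact_mod_cast h1y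
      linarith
    have hres' : insert (q,y) C ⊆ resClass V γ q r := by
      intro c hc
      rcases Set.mem_insert_iff.1 hc with hci | hci
      · subst hci; exact ⟨hyconf, rfl, hyr⟩
      · exact hCres hci
    have hCC' : ChainCond V γ q (insert (q,y) C) := by
      rintro c hc c' hc' hlt
      rcases Set.mem_insert_iff.1 hc with hceq | hcC <;>
        rcases Set.mem_insert_iff.1 hc' with hc'eq | hc'C
      · subst hceq; subst hc'eq; exact absurd hlt (lt_irrefl _)
      · subst hceq
        simp only at hlt
        rw [chainLinked_iff_linkedL]
        simp only
        rcases eq_or_lt_of_le h1y with heq | hlt1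
        · have := hlink (q, m₁) hm₁C c' hc'C (by simpa [← heq] using hlt)
          simpa [← heq] using this
        · have hbig := hlink (q, m₁) hm₁C c' hc'C (lt_trans hlt1 hlt)
          exact (linkedL_split hp h2 hh hl hWpos hbig hlt1 hlt
            (hdvd m₁ y h1y (by rw [hm₁r, hyr]))).2
      · subst hc'eq
        simp only at hlt
        rw [chainLinked_iff_linkedL]
        simp only
        rcases eq_or_lt_of_le h2y with heq | hlt2
        · have := hlink c hcC (q, m₂) hm₂C (by simpa [← heq] using hlt)
          simpa [← heq] using this
        · have hbig := hlink c hcC (q, m₂) hm₂C (lt_trans hlt hlt2)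
          exact (linkedL_split hp h2 hh hl hWpos hbig hlt hlt2
            (hdvd c.2 y hlt.le (by rw [hmodC c hcC, hyr]))).1
      · exact hCCC c hcC c' hc'C hlt
    have hins := hCmax _ (Set.subset_insert _ _) hres' hCC'
    rw [← hins]
    exact Set.mem_insert _ _
  -- Piece 2: chain elements above m₁ are not in U_n
  have hNotU : ∀ y, (q, y) ∈ C → m₁ ≤ y → (q, y) ∉ U V γ n := by
    intro y hyC h1y hyU
    cases n with
    | succ n =>
      exact hm₁S.2 (U_dcClosed V γ n C hchainC (q,y) ⟨hyU, hyC⟩ (q,m₁) hm₁C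
        (by simpa using h1y))
    | zero =>
      obtain ⟨C'', hC''mem, hyC''⟩ := hyU
      obtain ⟨hC''chain, hC''unb⟩ := hC''mem
      obtain ⟨q'', r'', hq''Q, hr''W, hC''res, hC''CC, hC''max⟩ := hC''chain
      have hq''q : q'' = q := by
        have hx := (hC''res hyC'').2.1
        simp only at hx
        exact hx.symm
      rw [hq''q] at hC''res hC''CC
      have hr''r : r'' = r := by
        have hx1 := (hC''res hyC'').2.2
        have hx2 := hmodC (q,y) hyC
        simp only at hx1 hx2
        rw [hWnat] at hx1
        rw [← hx1, hx2]
      rw [hr''r] at hC''res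
      set Cbig := C ∪ {c ∈ C'' | Mb < c.2} with hCbigdef
      have hresC : Cbig ⊆ resClass V γ q r := by
        intro c hc
        rcases hc with hcm | hcm
        · exact hCres hcm
        · exact hC''res hcm.1
      have hyMb : y ≤ Mb := hMb' _ hyC
      have hCCbig : ChainCond V γ q Cbig := by
        rintro c hc c' hc' hlt
        rcases hc with hcC | hcB <;> rcases hc' with hc'C | hc'B
        · exact hCCC c hcC c' hc'C hlt
        · rw [chainLinked_iff_linkedL]
          have hc'big : Mb < c'.2 := hc'B.2
          have hyc' : y < c'.2 := lt_of_le_of_lt hyMb hc'big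
          rcases lt_trichotomy c.2 y with hlty | heqy | hgty
          · have l1 := hlink c hcC (q,y) hyC hlty
            have l2 := hC''CC (q,y) hyC'' c' hc'B.1 hyc'
            exact linkedL_trans hp h2 hh hl l1 l2
          · have hceq : c = (q, y) := by
              obtain ⟨c1, c2⟩ := c
              simp only at heqy
              rw [show c1 = q from hfst (c1,c2) hcC, heqy]
            rw [hceq]
            exact hC''CC (q,y) hyC'' c' hc'B.1 (by rw [hceq] at hlt; exact hlt)
          · have hbig2 := hC''CC (q,y) hyC'' c' hc'B.1 hyc'
            rw [chainLinked_iff_linkedL] at hbig2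
            exact (linkedL_split hp h2 hh hl hWpos hbig2 hgty
              (lt_of_le_of_lt (hMb' c hcC) hc'big)
              (hdvd y c.2 hgty.le (by rw [hmodC (q,y) hyC, hmodC c hcC]))).2
        · exact absurd hlt (by have h1 := hMb' c' hc'C; have h2x := hcB.2; omega)
        · exact hC''CC c hcB.1 c' hc'B.1 hlt
      have hCbigC := hCmax Cbig Set.subset_union_left hresC hCCbig
      have hbigelt : ∃ v, v ∈ Prod.snd '' C'' ∧ Mb < v := by
        by_contra hcon
        push_neg at hcon
        exact hC''unb ⟨Mb, fun v hv => hcon v hv⟩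
      obtain ⟨v, ⟨cb, hcbC'', hcbv⟩, hvMb⟩ := hbigelt
      have hcbin : cb ∈ Cbig := Or.inr ⟨hcbC'', by omega⟩
      rw [hCbigC] at hcbin
      have := hMb' cb hcbin
      omega
  have hIn : ∀ y, m₁ ≤ y → y ≤ m₂ → y % W = r → (q,y) ∈ C \ U V γ n :=
    fun y ha hb hc' => ⟨hInC y ha hb hc', hNotU y (hInC y ha hb hc') ha⟩
  -- guard values
  set gfun : Q → ℕ := fun s => if hs : ∃ g, V.D s = {g}ᶜ then hs.choose else 0
    with hgfundef
  have hgspec : ∀ s, ¬ V.D s = Set.univ → V.D s = {gfun s}ᶜ := by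
    intro s hs
    have hex : ∃ g, V.D s = {g}ᶜ := by
      rcases hD s with hx | hx
      · exact absurd hx hs
      · exact hx
    rw [hgfundef]
    simp only
    rw [dif_pos hex]
    exact hex.choose_spec
  have hbounds : ∀ c ∈ deltaC V γ n q C, m₁ ≤ c.2 ∧ c.2 ≤ m₂ := by
    rintro c ⟨-, -, -, z₁, z₂, hz₁, hz₂, h1c, h2c⟩
    exact ⟨le_trans (hv_le _ hz₁).1 h1c, le_trans h2c (hv_le _ hz₂).2⟩
  have hδfin : (deltaC V γ n q C).Finite := by
    apply Set.Finite.subset ((Set.finite_Icc m₁ m₂).image (fun z => (q,z)))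
    intro c hcδ
    refine ⟨c.2, Set.mem_Icc.2 (hbounds c hcδ), ?_⟩
    obtain ⟨c1, c2⟩ := c
    simp only
    rw [show c1 = q from hcδ.2.1]
  refine ⟨hδfin, ?_⟩
  -- Piece 3: every configuration of δ is blocked at some position of the cycle
  have hkey : ∀ c ∈ deltaC V γ n q C, ∃ i, i < (γ q).length - 1 ∧
      pathWeight V (γ q) ∣ ((c.2:ℤ) + pathWeight V ((γ q).take (i+1))
        - (gfun ((γ q).getD i q) : ℤ)) := by
    intro c hcδ
    obtain ⟨hconf, hcq, hcU, -⟩ := hcδ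
    have hcpair : c = (q, c.2) := by
      obtain ⟨c1, c2⟩ := c
      simp only at hcq
      rw [hcq]
    have hcconf : (q, c.2) ∈ ConfPlus V γ := by rw [← hcpair]; exact hconf
    have hnotall : ¬ ∀ K, IsValidRun V (iterCycle (γ q) K) c.2 := by
      intro hall
      have hU0 := mem_U0_of_forever γ q hp h2 hh hl hWpos hqQ c.2 hcconf hall
      exact hcU (by rw [hcpair]; exact U_zero_subset V γ n hU0)
    push_neg at hnotall
    obtain ⟨K, hK⟩ := hnotall
    rw [iterCycle_valid_iff' hp h2 hh hl] at hK
    push_neg at hK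
    obtain ⟨j, hj, hPf⟩ := hK
    rw [Pcond_iff] at hPf
    have hiLm : j % ((γ q).length - 1) < (γ q).length - 1 := Nat.mod_lt _ (by omega)
    have hnn : 0 ≤ (c.2:ℤ) + ((j / ((γ q).length - 1) : ℕ) : ℤ) * pathWeight V (γ q)
        + pathWeight V ((γ q).take (j % ((γ q).length - 1) + 1)) := by
      have hpm : pmin V (γ q) ≤ pathWeight V ((γ q).take (j % ((γ q).length - 1) + 1)) :=
        pmin_le_take (by omega)
      have h0 : (0:ℤ) ≤ ((j / ((γ q).length - 1) : ℕ) : ℤ) * pathWeight V (γ q) :=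
        mul_nonneg (by positivity) hWpos.le
      have hcp := hcconf.2
      simp only at hcp
      linarith
    have hnotmem : ((c.2:ℤ) + ((j / ((γ q).length - 1) : ℕ) : ℤ) * pathWeight V (γ q)
        + pathWeight V ((γ q).take (j % ((γ q).length - 1) + 1))).toNat
          ∉ V.D ((γ q).getD (j % ((γ q).length - 1)) q) := by
      intro hmem
      exact hPf ⟨hnn, hmem⟩
    have hnuniv : ¬ V.D ((γ q).getD (j % ((γ q).length - 1)) q) = Set.univ := by
      intro hu
      rw [hu] at hnotmem
      exact hnotmem (Set.mem_univ _)
    have hDs := hgspec _ hnuniv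
    rw [hDs] at hnotmem
    have htn : ((c.2:ℤ) + ((j / ((γ q).length - 1) : ℕ) : ℤ) * pathWeight V (γ q)
        + pathWeight V ((γ q).take (j % ((γ q).length - 1) + 1))).toNat
          = gfun ((γ q).getD (j % ((γ q).length - 1)) q) := by
      by_contra hne
      exact hnotmem hne
    have hveq : (c.2:ℤ) + ((j / ((γ q).length - 1) : ℕ) : ℤ) * pathWeight V (γ q)
        + pathWeight V ((γ q).take (j % ((γ q).length - 1) + 1))
          = (gfun ((γ q).getD (j % ((γ q).length - 1)) q) : ℤ) := by
      rw [← htn]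
      exact (Int.toNat_of_nonneg hnn).symm
    refine ⟨j % ((γ q).length - 1), hiLm, ⟨-((j / ((γ q).length - 1) : ℕ) : ℤ), ?_⟩⟩
    linear_combination hveq
  -- the injection
  haveI : Finite ↥(C \ U V γ n) := hSfin.to_subtype
  have hLm0 : 0 < (γ q).length - 1 := by omega
  have hyval : ∀ x : ℕ, m₁ ≤ x → x ≤ m₂ → (q, m₁ + W * ((x - m₁)/W)) ∈ C \ U V γ n := by
    intro x ha hb
    apply hIn
    · omega
    · have := Nat.mul_div_le (x - m₁) W
      omega
    · rw [Nat.add_mul_mod_self_left, hm₁r]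
  choose idx hidx1 hidx2 using hkey
  set f : ↥(deltaC V γ n q C) → Fin ((γ q).length - 1) × ↥(C \ U V γ n) := fun c =>
    (⟨idx c.1 c.2, hidx1 c.1 c.2⟩,
     ⟨(q, m₁ + W * ((c.1.2 - m₁)/W)),
       hyval c.1.2 (hbounds c.1 c.2).1 (hbounds c.1 c.2).2⟩) with hfdef
  have hfinj : Function.Injective f := by
    rintro ⟨c₁, hc₁⟩ ⟨c₂, hc₂⟩ heq
    rw [hfdef] at heq
    simp only [Prod.mk.injEq, Subtype.mk.injEq, Fin.mk.injEq, Prod.mk.injEq] at heq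
    obtain ⟨hieq, hyeq⟩ := heq
    have hb₁ := hbounds c₁ hc₁
    have hb₂ := hbounds c₂ hc₂
    have hd₁ := hidx2 c₁ hc₁
    have hd₂ := hidx2 c₂ hc₂
    rw [hieq] at hd₁
    have hdiffZ := dvd_sub hd₁ hd₂
    have hsimp : ((c₁.2:ℤ) + pathWeight V ((γ q).take (idx c₂ hc₂ + 1))
          - (gfun ((γ q).getD (idx c₂ hc₂) q) : ℤ))
        - ((c₂.2:ℤ) + pathWeight V ((γ q).take (idx c₂ hc₂ + 1))
          - (gfun ((γ q).getD (idx c₂ hc₂) q) : ℤ)) = (c₁.2:ℤ) - (c₂.2:ℤ) := by ring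
    rw [hsimp] at hdiffZ
    rw [← hWeq] at hdiffZ
    have hx₁ : c₁.2 = m₁ + W * ((c₁.2 - m₁)/W) + (c₁.2 - m₁) % W := by
      have := Nat.div_add_mod (c₁.2 - m₁) W
      omega
    have hx₂ : c₂.2 = m₁ + W * ((c₂.2 - m₁)/W) + (c₂.2 - m₁) % W := by
      have := Nat.div_add_mod (c₂.2 - m₁) W
      omega
    have hr₁ : (c₁.2 - m₁) % W < W := Nat.mod_lt _ hW0
    have hr₂ : (c₂.2 - m₁) % W < W := Nat.mod_lt _ hW0
    have hyeq' : m₁ + W * ((c₁.2 - m₁)/W) = m₁ + W * ((c₂.2 - m₁)/W) := by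
      have := hyeq
      omega
    have hsndeq : c₁.2 = c₂.2 := by
      set t₁ := W * ((c₁.2 - m₁)/W) with ht₁
      set t₂ := W * ((c₂.2 - m₁)/W) with ht₂
      rcases le_total c₁.2 c₂.2 with hle | hle
      · have hneg : (c₂.2:ℤ) - (c₁.2:ℤ) = -(((c₁.2:ℤ) - (c₂.2:ℤ))) := by ring
        have hzd : (W:ℤ) ∣ ((c₂.2:ℤ) - (c₁.2:ℤ)) := by
          rw [hneg]; exact dvd_neg.2 hdiffZ
        have hcast : ((c₂.2 - c₁.2 : ℕ) : ℤ) = (c₂.2:ℤ) - (c₁.2:ℤ) := by omega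
        have hdnat : W ∣ (c₂.2 - c₁.2) := by
          rw [← Int.natCast_dvd_natCast, hcast]; exact hzd
        rcases Nat.eq_zero_or_pos (c₂.2 - c₁.2) with h0 | hposd
        · omega
        · have hWle := Nat.le_of_dvd hposd hdnat
          omega
      · have hcast : ((c₁.2 - c₂.2 : ℕ) : ℤ) = (c₁.2:ℤ) - (c₂.2:ℤ) := by omega
        have hdnat : W ∣ (c₁.2 - c₂.2) := by
          rw [← Int.natCast_dvd_natCast, hcast]; exact hdiffZ
        rcases Nat.eq_zero_or_pos (c₁.2 - c₂.2) with h0 | hposd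
        · omega
        · have hWle := Nat.le_of_dvd hposd hdnat
          omega
    apply Subtype.ext
    simp only
    have hfst1 : c₁.1 = c₂.1 := by rw [hc₁.2.1, hc₂.2.1]
    exact Prod.ext hfst1 hsndeq
  -- final counting
  have hcard := Nat.card_le_card_of_injective f hfinj
  rw [Nat.card_prod] at hcard
  have he1 : Nat.card ↥(deltaC V γ n q C) = (deltaC V γ n q C).ncard :=
    Nat.card_coe_set_eq _
  have he2 : Nat.card ↥(C \ U V γ n) = (C \ U V γ n).ncard :=
    Nat.card_coe_set_eq _
  have he3 : Nat.card (Fin ((γ q).length - 1)) = (γ q).length - 1 := by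
    simp [Nat.card_eq_fintype_card]
  rw [he1, he2, he3] at hcard
  have hLmQ : (γ q).length - 1 ≤ Fintype.card Q := by
    have hx := hnd.length_le_card
    rw [List.length_dropLast] at hx
    exact hx
  calc (deltaC V γ n q C).ncard ≤ ((γ q).length - 1) * (C \ U V γ n).ncard := hcard
    _ ≤ Fintype.card Q * (C \ U V γ n).ncard := Nat.mul_le_mul_right _ hLmQ
end VASSPaper
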